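/- arXiv:1112.4558 — 2 statements merged into one kernel-verified Lean document; each statement's English description precedes it below -/
import Mathlib

section
/- Let p be a prime and let ℓ₁, …, ℓ_{p-1} be a sequence of p−1 integers, none of which is divisible by p. Then for any integer s there exists a subset A ⊆ {1, …, p−1} (possibly empty) such that ∑_{i∈A} ℓᵢ ≡ s (mod p). -/
theorem stmt_0 (p : ℕ) (hp : p.Prime) (l : Fin (p - 1) → ℤ)
    (hl : ∀ i, ¬ (p : ℤ) ∣ l i) (s : ℤ) :
    ∃ A : Finset (Fin (p - 1)), (p : ℤ) ∣ (∑ i ∈ A, l i) - s := by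
  haveI : Fact p.Prime := ⟨hp⟩
  have hp2 := hp.two_le
  set g : Fin (p-1) → ZMod p := fun i => (l i : ZMod p) with hg
  have hg0 : ∀ i, g i ≠ 0 := by
    intro i h
    exact hl i ((ZMod.intCast_zmod_eq_zero_iff_dvd _ _).mp h)
  set Sk : ℕ → Finset (ZMod p) := fun k =>
    ((Finset.univ.filter (fun i : Fin (p-1) => (i:ℕ) < k)).powerset).image
      (fun A => ∑ i ∈ A, g i) with hSk
  have h0 : ∀ k, (0 : ZMod p) ∈ Sk k := by
    intro k
    exact Finset.mem_image.mpr ⟨∅, Finset.empty_mem_powerset _, by simp⟩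
  have key : ∀ k, k ≤ p - 1 → k + 1 ≤ (Sk k).card := by
    intro k
    induction k with
    | zero => intro _; exact Finset.card_pos.mpr ⟨0, h0 0⟩
    | succ k ih =>
      intro hk
      have hk' : k ≤ p - 1 := Nat.le_of_succ_le hk
      have hcard := ih hk'
      set a : Fin (p-1) := ⟨k, Nat.lt_of_lt_of_le (Nat.lt_succ_self k) hk⟩ with ha
      have hfil : Finset.univ.filter (fun i : Fin (p-1) => (i:ℕ) < k+1)
          = insert a (Finset.univ.filter (fun i : Fin (p-1) => (i:ℕ) < k)) := by
        ext i
        simp [Finset.mem_insert, Nat.lt_succ_iff_lt_or_eq, Fin.ext_iff, ha, or_comm] <;> omega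
      have hanotin : a ∉ Finset.univ.filter (fun i : Fin (p-1) => (i:ℕ) < k) := by
        simp [ha]
      have hSkk : Sk (k+1) = Sk k ∪ (Sk k).image (fun x => g a + x) := by
        rw [hSk]
        simp only
        rw [hfil, Finset.powerset_insert, Finset.image_union]
        congr 1
        ext x
        constructor
        · intro hx
          obtain ⟨B, hB, rfl⟩ := Finset.mem_image.mp hx
          obtain ⟨A, hA, rfl⟩ := Finset.mem_image.mp hB
          have haA : a ∉ A := fun h => hanotin (Finset.mem_powerset.mp hA h)
          refine Finset.mem_image.mpr ⟨∑ i ∈ A, g i,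
            Finset.mem_image.mpr ⟨A, hA, rfl⟩, ?_⟩
          rw [Finset.sum_insert haA]
        · intro hx
          obtain ⟨y, hy, rfl⟩ := Finset.mem_image.mp hx
          obtain ⟨A, hA, rfl⟩ := Finset.mem_image.mp hy
          have haA : a ∉ A := fun h => hanotin (Finset.mem_powerset.mp hA h)
          refine Finset.mem_image.mpr ⟨insert a A, Finset.mem_image_of_mem _ hA, ?_⟩
          rw [Finset.sum_insert haA]
      by_cases hcl : ∀ x ∈ Sk k, g a + x ∈ Sk k
      · have hiter : ∀ (n : ℕ), ∀ x ∈ Sk k, x + n • g a ∈ Sk k := by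
          intro n
          induction n with
          | zero => simp
          | succ n ihn =>
            intro x hx
            have := hcl _ (ihn x hx)
            rw [succ_nsmul]
            convert this using 1
            ring
        have huniv : Sk k = Finset.univ := by
          apply Finset.eq_univ_of_forall
          intro y
          have := hiter ((y * (g a)⁻¹).val) 0 (h0 k)
          rwa [nsmul_eq_mul, ZMod.natCast_val, ZMod.cast_id, zero_add,
            mul_assoc, inv_mul_cancel₀ (hg0 a), mul_one] at this
        have hub : p ≤ (Sk (k+1)).card := by
          have hsub : Sk k ⊆ Sk (k+1) := by
            rw [hSkk]; exact Finset.subset_union_left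
          calc p = Fintype.card (ZMod p) := (ZMod.card p).symm
            _ = (Sk k).card := by rw [huniv, Finset.card_univ]
            _ ≤ _ := Finset.card_le_card hsub
        omega
      · push_neg at hcl
        obtain ⟨x, hx, hnx⟩ := hcl
        have hsub : insert (g a + x) (Sk k) ⊆ Sk (k+1) := by
          rw [hSkk]
          intro y hy
          rcases Finset.mem_insert.mp hy with rfl | hy
          · exact Finset.mem_union_right _ (Finset.mem_image_of_mem _ hx)
          · exact Finset.mem_union_left _ hy
        have := Finset.card_le_card hsub
        rw [Finset.card_insert_of_notMem hnx] at this
        omega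
  have hfin := key (p-1) le_rfl
  have huniv : Sk (p-1) = Finset.univ := by
    apply Finset.eq_univ_of_card
    have hle : (Sk (p-1)).card ≤ Fintype.card (ZMod p) := Finset.card_le_univ _
    rw [ZMod.card] at hle ⊢
    omega
  have hs : (s : ZMod p) ∈ Sk (p-1) := huniv ▸ Finset.mem_univ _
  obtain ⟨A, -, hA⟩ := Finset.mem_image.mp hs
  refine ⟨A, ?_⟩
  have hc : ((∑ i ∈ A, l i - s : ℤ) : ZMod p) = 0 := by
    push_cast
    rw [show (∑ i ∈ A, (l i : ZMod p)) = ∑ i ∈ A, g i from rfl, hA]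
    ring
  exact (ZMod.intCast_zmod_eq_zero_iff_dvd _ _).mp hc
end

section
/- Let p be prime and let x, l₁, …, l_{2p−1} be integers with each lᵢ > 0. Suppose no lᵢ is divisible by p. Then there exist a subset A ⊆ {1,…,p−1} and a nonempty subset C ⊆ {p,…,2p−1} such that both x + ∑_{i∈A} lᵢ and x + ∑_{i∈A} lᵢ + ∑_{i∈C} lᵢ are divisible by p, and these two values are distinct; in particular at least one of them is a nonzero multiple of p. -/
open Finset Pointwise

lemma subsetSum_card (p : ℕ) (hp : p.Prime) {ι : Type*} [DecidableEq ι]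
    (s : Finset ι) (a : ι → ZMod p) (ha : ∀ i ∈ s, a i ≠ 0) :
    min p (s.card + 1) ≤ (s.powerset.image (fun A => ∑ i ∈ A, a i)).card := by
  induction s using Finset.induction_on with
  | empty =>
      simp only [Finset.powerset_empty, Finset.image_singleton, Finset.card_singleton,
        Finset.card_empty]
      have := hp.one_lt
      omega
  | @insert j s hj ih =>
      have ih' := ih (fun i hi => ha i (Finset.mem_insert_of_mem hi))
      set S : Finset (ZMod p) := s.powerset.image (fun A => ∑ i ∈ A, a i) with hS
      have hSne : S.Nonempty := ⟨∑ i ∈ (∅ : Finset ι), a i,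
        Finset.mem_image_of_mem _ (Finset.empty_mem_powerset s)⟩
      have hTne : ({0, a j} : Finset (ZMod p)).Nonempty := ⟨0, by simp⟩
      have hcd := ZMod.cauchy_davenport hp hTne hSne
      have hTcard : ({0, a j} : Finset (ZMod p)).card = 2 := by
        rw [Finset.card_insert_of_notMem (by simp [Ne.symm (ha j (Finset.mem_insert_self j s))]),
          Finset.card_singleton]
      have hsub : ({0, a j} : Finset (ZMod p)) + S ⊆
          (insert j s).powerset.image (fun A => ∑ i ∈ A, a i) := by
        intro z hz
        rw [Finset.mem_add] at hz
        obtain ⟨t, ht, u, hu, rfl⟩ := hz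
        rw [hS, Finset.mem_image] at hu
        obtain ⟨A, hA, rfl⟩ := hu
        rw [Finset.mem_powerset] at hA
        rcases Finset.mem_insert.1 ht with rfl | ht
        · rw [zero_add]
          exact Finset.mem_image_of_mem _
            (Finset.mem_powerset.2 (hA.trans (Finset.subset_insert j s)))
        · rw [Finset.mem_singleton] at ht
          subst ht
          have hjA : j ∉ A := fun h => hj (hA h)
          have : a j + ∑ i ∈ A, a i = ∑ i ∈ insert j A, a i :=
            (Finset.sum_insert hjA).symm
          rw [this]
          exact Finset.mem_image_of_mem _
            (Finset.mem_powerset.2 (Finset.insert_subset_insert j hA))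
      have h2 := Finset.card_le_card hsub
      rw [hTcard] at hcd
      rw [Finset.card_insert_of_notMem hj]
      omega

lemma cover_all (p : ℕ) (hp : p.Prime) {ι : Type*} [DecidableEq ι]
    (s : Finset ι) (a : ι → ZMod p) (ha : ∀ i ∈ s, a i ≠ 0) (hcard : p - 1 ≤ s.card)
    (t : ZMod p) : ∃ A ⊆ s, ∑ i ∈ A, a i = t := by
  haveI : Fact p.Prime := ⟨hp⟩
  have h := subsetSum_card p hp s a ha
  have hp1 := hp.one_lt
  have hmin : min p (s.card + 1) = p := by omega
  rw [hmin] at h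
  have hmem : t ∈ s.powerset.image (fun A => ∑ i ∈ A, a i) := by
    have hcard2 : Fintype.card (ZMod p) ≤ (s.powerset.image (fun A => ∑ i ∈ A, a i)).card := by
      rwa [ZMod.card]
    have := Finset.eq_univ_of_card _ (le_antisymm (Finset.card_le_univ _) hcard2)
    rw [this]; exact Finset.mem_univ t
  obtain ⟨A, hA, hAt⟩ := Finset.mem_image.1 hmem
  exact ⟨A, Finset.mem_powerset.1 hA, hAt⟩

theorem stmt_10 (p : ℕ) (hp : p.Prime) (x : ℤ) (l : Fin (2 * p - 1) → ℤ)
    (hpos : ∀ i, 0 < l i) (hnd : ∀ i, ¬ (p : ℤ) ∣ l i) :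
    ∃ A C : Finset (Fin (2 * p - 1)),
      (∀ i ∈ A, (i : ℕ) < p - 1) ∧
      (∀ i ∈ C, p - 1 ≤ (i : ℕ)) ∧
      C.Nonempty ∧
      (p : ℤ) ∣ x + ∑ i ∈ A, l i ∧
      (p : ℤ) ∣ x + ∑ i ∈ A, l i + ∑ i ∈ C, l i ∧
      x + ∑ i ∈ A, l i ≠ x + ∑ i ∈ A, l i + ∑ i ∈ C, l i ∧
      (x + ∑ i ∈ A, l i ≠ 0 ∨ x + ∑ i ∈ A, l i + ∑ i ∈ C, l i ≠ 0) := by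
  have hp1 := hp.one_lt
  have hane : ∀ i : Fin (2 * p - 1), ((l i : ZMod p)) ≠ 0 := by
    intro i h
    apply hnd i
    rwa [← ZMod.intCast_zmod_eq_zero_iff_dvd]
  set s1 : Finset (Fin (2 * p - 1)) := (Finset.univ : Finset (Fin (p - 1))).map
    ⟨fun k => ⟨k.val, by omega⟩, fun k m h => by simpa [Fin.ext_iff] using h⟩ with hs1
  have hs1card : s1.card = p - 1 := by simp [hs1]
  have hs1mem : ∀ i ∈ s1, (i : ℕ) < p - 1 := by
    intro i hi
    rw [hs1, Finset.mem_map] at hi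
    obtain ⟨k, _, rfl⟩ := hi
    exact k.isLt
  set s2 : Finset (Fin (2 * p - 1)) := (Finset.univ : Finset (Fin (p - 1))).map
    ⟨fun k => ⟨p - 1 + k.val, by omega⟩, fun k m h => by simpa [Fin.ext_iff] using h⟩ with hs2
  have hs2card : s2.card = p - 1 := by simp [hs2]
  have hs2mem : ∀ i ∈ s2, p - 1 ≤ (i : ℕ) ∧ (i : ℕ) < 2 * p - 2 := by
    intro i hi
    rw [hs2, Finset.mem_map] at hi
    obtain ⟨k, _, rfl⟩ := hi
    have := k.isLt
    constructor
    · show p - 1 ≤ p - 1 + (k : ℕ); omega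
    · show p - 1 + (k : ℕ) < 2 * p - 2; omega
  set i0 : Fin (2 * p - 1) := ⟨2 * p - 2, by omega⟩ with hi0
  obtain ⟨A, hAs, hAsum⟩ := cover_all p hp s1 (fun i => ((l i : ZMod p)))
    (fun i _ => hane i) (le_of_eq hs1card.symm) (-(x : ZMod p))
  obtain ⟨C', hCs, hCsum⟩ := cover_all p hp s2 (fun i => ((l i : ZMod p)))
    (fun i _ => hane i) (le_of_eq hs2card.symm) (-((l i0 : ZMod p)))
  have hi0C' : i0 ∉ C' := by
    intro h
    have h2 := (hs2mem i0 (hCs h)).2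
    have : (i0 : ℕ) = 2 * p - 2 := rfl
    omega
  have hCpos : 0 < ∑ i ∈ insert i0 C', l i :=
    Finset.sum_pos (fun i _ => hpos i) ⟨i0, Finset.mem_insert_self _ _⟩
  have key1 : (p : ℤ) ∣ x + ∑ i ∈ A, l i := by
    rw [← ZMod.intCast_zmod_eq_zero_iff_dvd]
    push_cast
    rw [hAsum]
    ring
  have key2 : (p : ℤ) ∣ x + ∑ i ∈ A, l i + ∑ i ∈ insert i0 C', l i := by
    rw [← ZMod.intCast_zmod_eq_zero_iff_dvd]
    push_cast
    rw [hAsum, Finset.sum_insert hi0C', hCsum]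
    ring
  refine ⟨A, insert i0 C', fun i hi => hs1mem i (hAs hi), ?_,
    ⟨i0, Finset.mem_insert_self _ _⟩, key1, key2, by omega, by omega⟩
  intro i hi
  rcases Finset.mem_insert.1 hi with rfl | hi
  · have : (i0 : ℕ) = 2 * p - 2 := rfl
    omega
  · exact (hs2mem i (hCs hi)).1
end
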